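/- Let n ≥ 2, let (X,d) be a complete metric space with |X| ≥ n, and let T : X → X be a mapping contracting total pairwise distance on n points. Suppose T has a fixed point x* that is the limit of an iteration sequence x₀, x₁ = Tx₀, x₂ = Tx₁, ... with xᵢ ≠ x* for all i ≥ 1. Then x* is the unique fixed point of T. -/

import Mathlib

noncomputable def totalS {X : Type*} [MetricSpace X] {n : ℕ} (x : Fin n → X) : ℝ :=
  ∑ i : Fin n, ∑ j ∈ Finset.Ioi i, dist (x i) (x j)

theorem stmt_7 {X : Type*} [MetricSpace X] [CompleteSpace X] (n : ℕ) (hn : 2 ≤ n)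
    (hcard : ∃ f : Fin n → X, Function.Injective f)
    (T : X → X)
    (hT : ∃ α : ℝ, 0 ≤ α ∧ α < 1 ∧
      ∀ x : Fin n → X, Function.Injective x → totalS (T ∘ x) ≤ α * totalS x)
    (xstar : X) (hfix : T xstar = xstar)
    (x : ℕ → X) (hiter : ∀ i : ℕ, x (i + 1) = T (x i))
    (hlim : Filter.Tendsto x Filter.atTop (nhds xstar))
    (hne : ∀ i : ℕ, 1 ≤ i → x i ≠ xstar) :
    ∀ y : X, T y = y → y = xstar := by
  obtain ⟨α, hα0, hα1, hcontr⟩ := hT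
  intro y hy
  by_contra hyne
  have hD : 0 < dist y xstar := dist_pos.mpr hyne
  -- shifting equal orbit points
  have hshift : ∀ a b t : ℕ, x a = x b → x (a + t) = x (b + t) := by
    intro a b t h
    induction t with
    | zero => simpa using h
    | succ t ih =>
      show x ((a + t) + 1) = x ((b + t) + 1)
      rw [hiter, hiter, ih]
  -- orbit points with index ≥ 1 are pairwise distinct
  have horbinj : ∀ a b : ℕ, 1 ≤ a → a < b → x a ≠ x b := by
    intro a b ha hab h
    set p := b - a with hp
    have hp1 : 1 ≤ p := by omega
    have hper : ∀ m : ℕ, x (a + m * p) = x a := by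
      intro m
      induction m with
      | zero => simp
      | succ m ih =>
        have e : a + (m + 1) * p = b + m * p := by
          rw [Nat.succ_mul]; omega
        rw [e, ← hshift a b (m * p) h, ih]
    have hmono : Filter.Tendsto (fun m : ℕ => a + m * p) Filter.atTop Filter.atTop := by
      apply Filter.tendsto_atTop_mono (fun m => ?_) Filter.tendsto_id
      have := Nat.mul_le_mul_left m hp1
      simp only [Nat.mul_one] at this
      simp only [id_eq]
      omega
    have hsub : Filter.Tendsto (fun m : ℕ => x (a + m * p)) Filter.atTop (nhds xstar) :=
      hlim.comp hmono
    simp only [hper] at hsub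
    exact hne a ha (tendsto_nhds_unique tendsto_const_nhds hsub)
  have hinj2 : ∀ a b : ℕ, 1 ≤ a → 1 ≤ b → x a = x b → a = b := by
    intro a b ha hb h
    rcases lt_trichotomy a b with h' | h' | h'
    · exact absurd h (horbinj a b ha h')
    · exact h'
    · exact absurd h.symm (horbinj b a hb h')
  -- choose k with all later orbit points close to xstar
  obtain ⟨k0, hk0⟩ := (Metric.tendsto_atTop.mp hlim) (dist y xstar) hD
  set k : ℕ := k0 + 1 with hkdef
  have hk : ∀ j, k ≤ j → dist (x j) xstar < dist y xstar := fun j hj => hk0 j (by omega)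
  have hxney : ∀ j, k ≤ j → x j ≠ y := by
    intro j hj h
    have := hk j hj
    rw [h] at this
    exact lt_irrefl _ this
  -- the tuples
  set u : ℕ → Fin n → X := fun m i =>
    if (i : ℕ) = 0 then y else if (i : ℕ) = 1 then xstar
    else x (k + m + ((i : ℕ) - 2)) with hu
  have hTu : ∀ m, T ∘ u m = u (m + 1) := by
    intro m
    funext i
    simp only [Function.comp_apply, hu]
    split_ifs with h1 h2
    · exact hy
    · exact hfix
    · have e : k + (m + 1) + ((i : ℕ) - 2) = (k + m + ((i : ℕ) - 2)) + 1 := by omega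
      rw [e, hiter]
  have huinj : ∀ m, Function.Injective (u m) := by
    intro m i j h
    simp only [hu] at h
    split_ifs at h with h1 h2 h3 h4 h5 h6 h7 h8
    all_goals try (exact Fin.ext (by omega))
    · exact absurd h hyne
    · exact absurd h.symm (hxney _ (by omega))
    · exact absurd h.symm hyne
    · exact absurd h.symm (hne _ (by omega))
    · exact absurd h (hxney _ (by omega))
    · exact absurd h (hne _ (by omega))
    · have := hinj2 _ _ (by omega) (by omega) h
      exact Fin.ext (by omega)
  have hS : ∀ m, totalS (u (m + 1)) ≤ α * totalS (u m) := by
    intro m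
    rw [← hTu m]
    exact hcontr (u m) (huinj m)
  have hgeo : ∀ m, totalS (u m) ≤ α ^ m * totalS (u 0) := by
    intro m
    induction m with
    | zero => simp
    | succ m ih =>
      calc totalS (u (m + 1)) ≤ α * totalS (u m) := hS m
        _ ≤ α * (α ^ m * totalS (u 0)) := by
            exact mul_le_mul_of_nonneg_left ih hα0
        _ = α ^ (m + 1) * totalS (u 0) := by ring
  have hlow : ∀ m, dist y xstar ≤ totalS (u m) := by
    intro m
    have i0 : Fin n := ⟨0, by omega⟩
    have hmem : (⟨1, by omega⟩ : Fin n) ∈ Finset.Ioi (⟨0, by omega⟩ : Fin n) :=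
      Finset.mem_Ioi.mpr (by exact Fin.mk_lt_mk.mpr Nat.zero_lt_one)
    have step1 : dist (u m ⟨0, by omega⟩) (u m ⟨1, by omega⟩) ≤
        ∑ j ∈ Finset.Ioi (⟨0, by omega⟩ : Fin n), dist (u m ⟨0, by omega⟩) (u m j) :=
      Finset.single_le_sum (fun j _ => dist_nonneg) hmem
    have step2 : ∑ j ∈ Finset.Ioi (⟨0, by omega⟩ : Fin n), dist (u m ⟨0, by omega⟩) (u m j) ≤
        totalS (u m) := by
      unfold totalS
      exact Finset.single_le_sum
        (f := fun i => ∑ j ∈ Finset.Ioi i, dist (u m i) (u m j))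
        (fun i _ => Finset.sum_nonneg fun j _ => dist_nonneg) (Finset.mem_univ _)
    have heq : dist (u m ⟨0, by omega⟩) (u m ⟨1, by omega⟩) = dist y xstar := by
      simp [hu]
    linarith
  have hlim2 : Filter.Tendsto (fun m : ℕ => α ^ m * totalS (u 0)) Filter.atTop (nhds 0) := by
    have := (tendsto_pow_atTop_nhds_zero_of_lt_one hα0 hα1).mul_const (totalS (u 0))
    simpa using this
  have hfin : dist y xstar ≤ 0 :=
    ge_of_tendsto hlim2 (Filter.Eventually.of_forall fun m => (hlow m).trans (hgeo m))
  linarith
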